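/- Let V be a double Poisson algebra with 2-fold bracket {{−,−}}, and set {a,b} := m{{a,b}} ∈ V. Then for all a,b,c ∈ V: (i) {a,b} + {b,a} ∈ [V,V]; (ii) {a,{b,c}} − {b,{a,c}} = {{a,b},c} (an exact identity in V). Consequently V/[V,V], with bracket [tr a, tr b] := tr{a,b}, is a Lie algebra over 𝔽, and (tr a, b) ↦ {a,b} defines a representation of this Lie algebra on V by derivations of the associative product of V. -/

import Mathlib

open TensorProduct LinearMap

section DPA

variable (𝔽 : Type) [Field 𝔽] (V : Type) [Ring V] [Algebra 𝔽 V]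

/-- The swap `(u ⊗ v)^σ = v ⊗ u` on `V ⊗ V`. -/
noncomputable abbrev swap2 : V ⊗[𝔽] V ≃ₗ[𝔽] V ⊗[𝔽] V := TensorProduct.comm 𝔽 V V

/-- The cyclic permutation `(u ⊗ v ⊗ w)^σ = w ⊗ u ⊗ v` on `V ⊗ V ⊗ V = (V ⊗ V) ⊗ V`. -/
noncomputable def sigma3 : (V ⊗[𝔽] V) ⊗[𝔽] V ≃ₗ[𝔽] (V ⊗[𝔽] V) ⊗[𝔽] V :=
  (TensorProduct.comm 𝔽 (V ⊗[𝔽] V) V).trans (TensorProduct.assoc 𝔽 V V V).symm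

/-- Left multiplication `a · (u ⊗ v) = (a*u) ⊗ v` (outer bimodule structure). -/
noncomputable def lact2 (a : V) : V ⊗[𝔽] V →ₗ[𝔽] V ⊗[𝔽] V :=
  LinearMap.rTensor V (LinearMap.mulLeft 𝔽 a)

/-- Right multiplication `(u ⊗ v) · c = u ⊗ (v*c)` (outer bimodule structure). -/
noncomputable def ract2 (c : V) : V ⊗[𝔽] V →ₗ[𝔽] V ⊗[𝔽] V :=
  LinearMap.lTensor V (LinearMap.mulRight 𝔽 c)

/-- `(u ⊗ v) ⋆₁ b = (u*b) ⊗ v`. -/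
noncomputable def star1r (b : V) : V ⊗[𝔽] V →ₗ[𝔽] V ⊗[𝔽] V :=
  LinearMap.rTensor V (LinearMap.mulRight 𝔽 b)

/-- `a ⋆₁ (u ⊗ v) = u ⊗ (a*v)`. -/
noncomputable def star1l (a : V) : V ⊗[𝔽] V →ₗ[𝔽] V ⊗[𝔽] V :=
  LinearMap.lTensor V (LinearMap.mulLeft 𝔽 a)

/-- The `•`-product on `V ⊗ V`:  `(u ⊗ v) • (x ⊗ y) = (u*x) ⊗ (y*v)`
(the multiplication of `V ⊗ Vᵒᵖ`). -/
noncomputable def bullet : V ⊗[𝔽] V →ₗ[𝔽] V ⊗[𝔽] V →ₗ[𝔽] V ⊗[𝔽] V :=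
  TensorProduct.lift
    (((TensorProduct.mapBilinear (RingHom.id 𝔽) V V V V).comp (LinearMap.mul 𝔽 V)).compl₂
      ((LinearMap.mul 𝔽 V).flip))

/-- A `2`-fold bracket on `V`: an `𝔽`-bilinear map `V × V → V ⊗ V` satisfying the two
Leibniz rules `{{a,bc}} = {{a,b}}·c + b·{{a,c}}` and `{{ab,c}} = {{a,c}} ⋆₁ b + a ⋆₁ {{b,c}}`. -/
def IsDoubleBracket (Br : V →ₗ[𝔽] V →ₗ[𝔽] V ⊗[𝔽] V) : Prop :=
  (∀ a b c : V, Br a (b * c) = ract2 𝔽 V c (Br a b) + lact2 𝔽 V b (Br a c)) ∧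
  (∀ a b c : V, Br (a * b) c = star1r 𝔽 V b (Br a c) + star1l 𝔽 V a (Br b c))

variable {𝔽 V}

/-- `{{a, B}}_L` : apply the bracket to the first tensor factor. -/
noncomputable def brL (Br : V →ₗ[𝔽] V →ₗ[𝔽] V ⊗[𝔽] V) (a : V) :
    V ⊗[𝔽] V →ₗ[𝔽] (V ⊗[𝔽] V) ⊗[𝔽] V :=
  LinearMap.rTensor V (Br a)

/-- `{{a, B}}_R` : apply the bracket to the second tensor factor. -/
noncomputable def brR (Br : V →ₗ[𝔽] V →ₗ[𝔽] V ⊗[𝔽] V) (a : V) :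
    V ⊗[𝔽] V →ₗ[𝔽] (V ⊗[𝔽] V) ⊗[𝔽] V :=
  (TensorProduct.assoc 𝔽 V V V).symm.toLinearMap ∘ₗ LinearMap.lTensor V (Br a)

variable (𝔽 V)

/-- `ρ₂` : swap the last two tensor factors of `V ⊗ V ⊗ V`. -/
noncomputable def rho2 : (V ⊗[𝔽] V) ⊗[𝔽] V ≃ₗ[𝔽] (V ⊗[𝔽] V) ⊗[𝔽] V :=
  (TensorProduct.assoc 𝔽 V V V).trans
    ((TensorProduct.congr (LinearEquiv.refl 𝔽 V) (TensorProduct.comm 𝔽 V V)).trans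
      (TensorProduct.assoc 𝔽 V V V).symm)

variable {𝔽 V}

/-- Conjugated bullet action used to define the actions `•ᵢ` of `V ⊗ V` on `V ⊗ V ⊗ V`. -/
noncomputable def conjAct (β : V ⊗[𝔽] V →ₗ[𝔽] V ⊗[𝔽] V →ₗ[𝔽] V ⊗[𝔽] V)
    (ρ : (V ⊗[𝔽] V) ⊗[𝔽] V ≃ₗ[𝔽] (V ⊗[𝔽] V) ⊗[𝔽] V) :
    V ⊗[𝔽] V →ₗ[𝔽] (V ⊗[𝔽] V) ⊗[𝔽] V →ₗ[𝔽] (V ⊗[𝔽] V) ⊗[𝔽] V :=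
  (LinearMap.lcomp 𝔽 _ ρ.toLinearMap) ∘ₗ
    (LinearMap.llcomp 𝔽 ((V ⊗[𝔽] V) ⊗[𝔽] V) ((V ⊗[𝔽] V) ⊗[𝔽] V) ((V ⊗[𝔽] V) ⊗[𝔽] V)
      ρ.symm.toLinearMap) ∘ₗ
    (LinearMap.rTensorHom V) ∘ₗ β

variable (𝔽 V)

/-- The right action `X •₁ A`, i.e. `(x⊗y⊗z) •₁ (a⊗b) = x⊗(y*a)⊗(b*z)`;
`bAct1R A X = X •₁ A`. -/
noncomputable def bAct1R : V ⊗[𝔽] V →ₗ[𝔽] (V ⊗[𝔽] V) ⊗[𝔽] V →ₗ[𝔽] (V ⊗[𝔽] V) ⊗[𝔽] V :=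
  conjAct (bullet 𝔽 V).flip ((sigma3 𝔽 V).trans (sigma3 𝔽 V))

/-- The left action `A •₂ X`, i.e. `(a⊗b) •₂ (x⊗y⊗z) = (a*x)⊗y⊗(z*b)`. -/
noncomputable def bAct2L : V ⊗[𝔽] V →ₗ[𝔽] (V ⊗[𝔽] V) ⊗[𝔽] V →ₗ[𝔽] (V ⊗[𝔽] V) ⊗[𝔽] V :=
  conjAct (bullet 𝔽 V) (rho2 𝔽 V)

/-- The right action `X •₃ A`, i.e. `(x⊗y⊗z) •₃ (a⊗b) = (x*a)⊗(b*y)⊗z`;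
`bAct3R A X = X •₃ A`. -/
noncomputable def bAct3R : V ⊗[𝔽] V →ₗ[𝔽] (V ⊗[𝔽] V) ⊗[𝔽] V →ₗ[𝔽] (V ⊗[𝔽] V) ⊗[𝔽] V :=
  conjAct (bullet 𝔽 V).flip (LinearEquiv.refl 𝔽 ((V ⊗[𝔽] V) ⊗[𝔽] V))

/-- `a ⋆₁ (x⊗y⊗z) = x⊗(a*y)⊗z`. -/
noncomputable def slot2L (a : V) : (V ⊗[𝔽] V) ⊗[𝔽] V →ₗ[𝔽] (V ⊗[𝔽] V) ⊗[𝔽] V :=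
  LinearMap.rTensor V (LinearMap.lTensor V (LinearMap.mulLeft 𝔽 a))

/-- `(x⊗y⊗z) ⋆₁ b = x⊗(y*b)⊗z`. -/
noncomputable def slot2R (b : V) : (V ⊗[𝔽] V) ⊗[𝔽] V →ₗ[𝔽] (V ⊗[𝔽] V) ⊗[𝔽] V :=
  LinearMap.rTensor V (LinearMap.lTensor V (LinearMap.mulRight 𝔽 b))

/-- `a ⋆₂ (x⊗y⊗z) = x⊗y⊗(a*z)`. -/
noncomputable def slot3L (a : V) : (V ⊗[𝔽] V) ⊗[𝔽] V →ₗ[𝔽] (V ⊗[𝔽] V) ⊗[𝔽] V :=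
  LinearMap.lTensor (V ⊗[𝔽] V) (LinearMap.mulLeft 𝔽 a)

/-- `(x⊗y⊗z) ⋆₂ b = (x*b)⊗y⊗z`. -/
noncomputable def slot1R (b : V) : (V ⊗[𝔽] V) ⊗[𝔽] V →ₗ[𝔽] (V ⊗[𝔽] V) ⊗[𝔽] V :=
  LinearMap.rTensor V (LinearMap.rTensor V (LinearMap.mulRight 𝔽 b))

/-- outer left: `a · (x⊗y⊗z) = (a*x)⊗y⊗z`. -/
noncomputable def slot1L (a : V) : (V ⊗[𝔽] V) ⊗[𝔽] V →ₗ[𝔽] (V ⊗[𝔽] V) ⊗[𝔽] V :=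
  LinearMap.rTensor V (LinearMap.rTensor V (LinearMap.mulLeft 𝔽 a))

/-- outer right: `(x⊗y⊗z) · b = x⊗y⊗(z*b)`. -/
noncomputable def slot3R (b : V) : (V ⊗[𝔽] V) ⊗[𝔽] V →ₗ[𝔽] (V ⊗[𝔽] V) ⊗[𝔽] V :=
  LinearMap.lTensor (V ⊗[𝔽] V) (LinearMap.mulRight 𝔽 b)

variable {𝔽 V}

/-- The triple bracket `{{a,b,c}}`. -/
noncomputable def triple (Br : V →ₗ[𝔽] V →ₗ[𝔽] V ⊗[𝔽] V) (a b c : V) :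
    (V ⊗[𝔽] V) ⊗[𝔽] V :=
  brL Br a (Br b c) + sigma3 𝔽 V (brL Br b (Br c a)) +
    sigma3 𝔽 V (sigma3 𝔽 V (brL Br c (Br a b)))

variable (𝔽 V)

/-- Skewsymmetry of a 2-fold bracket. -/
def IsSkew (Br : V →ₗ[𝔽] V →ₗ[𝔽] V ⊗[𝔽] V) : Prop :=
  ∀ a b : V, Br a b = - swap2 𝔽 V (Br b a)

/-- The span of commutators `[V,V]`. -/
def commSub : Submodule 𝔽 V := Submodule.span 𝔽 {x : V | ∃ a b : V, x = a * b - b * a}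

variable {𝔽 V}

/-- The associated bracket `{a,b} = m {{a,b}}`. -/
noncomputable def sb (Br : V →ₗ[𝔽] V →ₗ[𝔽] V ⊗[𝔽] V) (a b : V) : V :=
  LinearMap.mul' 𝔽 V (Br a b)

/-- A 2-fold derivation: `D(ab) = (Da)·b + a·(Db)`. -/
def Is2Deriv (D : V →ₗ[𝔽] V ⊗[𝔽] V) : Prop :=
  ∀ a b : V, D (a * b) = ract2 𝔽 V b (D a) + lact2 𝔽 V a (D b)

/-- `D` and `E` strongly commute: `D_L ∘ E = E_R ∘ D`. -/
def StronglyComm (D E : V →ₗ[𝔽] V ⊗[𝔽] V) : Prop :=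
  ∀ f : V, LinearMap.rTensor V D (E f) =
    (TensorProduct.assoc 𝔽 V V V).symm (LinearMap.lTensor V E (D f))


section Helpers

variable {𝔽 : Type} [Field 𝔽] {V : Type} [Ring V] [Algebra 𝔽 V]

/-- Multiply all three tensor factors. -/
noncomputable def m3 : (V ⊗[𝔽] V) ⊗[𝔽] V →ₗ[𝔽] V :=
  (LinearMap.mul' 𝔽 V) ∘ₗ (LinearMap.rTensor V (LinearMap.mul' 𝔽 V))

@[simp] lemma m3_tmul (x y z : V) : (m3 : (V ⊗[𝔽] V) ⊗[𝔽] V →ₗ[𝔽] V) ((x ⊗ₜ y) ⊗ₜ z) = x * y * z := by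
  simp [m3]

lemma m3_tmul' (X : V ⊗[𝔽] V) (v : V) :
    (m3 : (V ⊗[𝔽] V) ⊗[𝔽] V →ₗ[𝔽] V) (X ⊗ₜ v) = LinearMap.mul' 𝔽 V X * v := by
  induction X using TensorProduct.induction_on with
  | zero => simp [zero_tmul]
  | tmul x y => simp
  | add X Y hX hY => simp [add_tmul, add_mul, hX, hY]

lemma m3_assoc_symm (u : V) (X : V ⊗[𝔽] V) :
    (m3 : (V ⊗[𝔽] V) ⊗[𝔽] V →ₗ[𝔽] V) ((TensorProduct.assoc 𝔽 V V V).symm (u ⊗ₜ X)) =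
      u * LinearMap.mul' 𝔽 V X := by
  induction X using TensorProduct.induction_on with
  | zero => rw [tmul_zero, LinearEquiv.map_zero, map_zero, map_zero, mul_zero]
  | tmul x y => simp [TensorProduct.assoc_symm_tmul, mul_assoc]
  | add X Y hX hY => rw [tmul_add, LinearEquiv.map_add, map_add, map_add, mul_add, hX, hY]

lemma m3_sigma_tmul (X : V ⊗[𝔽] V) (v : V) :
    (m3 : (V ⊗[𝔽] V) ⊗[𝔽] V →ₗ[𝔽] V) (sigma3 𝔽 V (X ⊗ₜ v)) = v * LinearMap.mul' 𝔽 V X := by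
  rw [sigma3, LinearEquiv.trans_apply, TensorProduct.comm_tmul]
  exact m3_assoc_symm v X

lemma m3_sigma2_swap (W : V ⊗[𝔽] V) (v : V) :
    (m3 : (V ⊗[𝔽] V) ⊗[𝔽] V →ₗ[𝔽] V) (sigma3 𝔽 V (sigma3 𝔽 V ((swap2 𝔽 V W) ⊗ₜ v))) =
      LinearMap.mul' 𝔽 V (star1r 𝔽 V v W) := by
  induction W using TensorProduct.induction_on with
  | zero => simp [zero_tmul]
  | tmul s t =>
      simp [sigma3, star1r, TensorProduct.comm_tmul, TensorProduct.assoc_symm_tmul, mul_assoc]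
  | add X Y hX hY => simp only [map_add, add_tmul, hX, hY]

lemma m2_ract (v : V) (X : V ⊗[𝔽] V) :
    LinearMap.mul' 𝔽 V (ract2 𝔽 V v X) = LinearMap.mul' 𝔽 V X * v := by
  induction X using TensorProduct.induction_on with
  | zero => simp
  | tmul x y => simp [ract2, mul_assoc]
  | add X Y hX hY => simp [map_add, add_mul, hX, hY]

lemma m2_lact (u : V) (X : V ⊗[𝔽] V) :
    LinearMap.mul' 𝔽 V (lact2 𝔽 V u X) = u * LinearMap.mul' 𝔽 V X := by
  induction X using TensorProduct.induction_on with
  | zero => simp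
  | tmul x y => simp [lact2, mul_assoc]
  | add X Y hX hY => simp [map_add, mul_add, hX, hY]

lemma m2_star1l_eq (b : V) (X : V ⊗[𝔽] V) :
    LinearMap.mul' 𝔽 V (star1l 𝔽 V b X) = LinearMap.mul' 𝔽 V (star1r 𝔽 V b X) := by
  induction X using TensorProduct.induction_on with
  | zero => simp
  | tmul x y => simp [star1l, star1r, mul_assoc]
  | add X Y hX hY => simp [map_add, hX, hY]

lemma m2_sub_swap_mem (X : V ⊗[𝔽] V) :
    LinearMap.mul' 𝔽 V X - LinearMap.mul' 𝔽 V (swap2 𝔽 V X) ∈ commSub 𝔽 V := by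
  induction X using TensorProduct.induction_on with
  | zero => simp [commSub]
  | tmul u v =>
      simp only [TensorProduct.comm_tmul, LinearMap.mul'_apply]
      exact Submodule.subset_span ⟨u, v, rfl⟩
  | add X Y hX hY =>
      rw [map_add, map_add, map_add]
      have h : LinearMap.mul' 𝔽 V X + LinearMap.mul' 𝔽 V Y -
          (LinearMap.mul' 𝔽 V (swap2 𝔽 V X) + LinearMap.mul' 𝔽 V (swap2 𝔽 V Y)) =
          (LinearMap.mul' 𝔽 V X - LinearMap.mul' 𝔽 V (swap2 𝔽 V X)) +
          (LinearMap.mul' 𝔽 V Y - LinearMap.mul' 𝔽 V (swap2 𝔽 V Y)) := by abel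
      rw [h]
      exact add_mem hX hY

variable {Br : V →ₗ[𝔽] V →ₗ[𝔽] V ⊗[𝔽] V}

lemma sbA (hBr : IsDoubleBracket 𝔽 V Br) (a : V) (B : V ⊗[𝔽] V) :
    LinearMap.mul' 𝔽 V (Br a (LinearMap.mul' 𝔽 V B)) =
      m3 (brL Br a B) + m3 (brR Br a B) := by
  induction B using TensorProduct.induction_on with
  | zero => simp
  | tmul u v =>
      rw [LinearMap.mul'_apply, hBr.1 a u v, map_add, m2_ract, m2_lact]
      rw [brL, brR, LinearMap.rTensor_tmul, LinearMap.comp_apply, LinearMap.lTensor_tmul,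
        LinearEquiv.coe_coe, m3_tmul', m3_assoc_symm]
  | add X Y hX hY =>
      simp only [map_add, hX, hY]
      abel

lemma sigmaTerm (b : V) (X : V ⊗[𝔽] V) :
    (m3 : (V ⊗[𝔽] V) ⊗[𝔽] V →ₗ[𝔽] V) (sigma3 𝔽 V (brL Br b (swap2 𝔽 V X))) =
      m3 (brR Br b X) := by
  induction X using TensorProduct.induction_on with
  | zero => simp
  | tmul p q =>
      rw [TensorProduct.comm_tmul, brL, LinearMap.rTensor_tmul, m3_sigma_tmul,
        brR, LinearMap.comp_apply, LinearMap.lTensor_tmul, LinearEquiv.coe_coe, m3_assoc_symm]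
  | add X Y hX hY => simp only [map_add, hX, hY]

lemma lemC (hBr : IsDoubleBracket 𝔽 V Br) (hskew : IsSkew 𝔽 V Br) (c : V) (X : V ⊗[𝔽] V) :
    LinearMap.mul' 𝔽 V (Br (LinearMap.mul' 𝔽 V X) c) =
      - m3 (sigma3 𝔽 V (sigma3 𝔽 V (brL Br c X)))
      - m3 (sigma3 𝔽 V (sigma3 𝔽 V (brL Br c (swap2 𝔽 V X)))) := by
  induction X using TensorProduct.induction_on with
  | zero => simp
  | tmul x y =>
      rw [LinearMap.mul'_apply, hBr.2 x y c, map_add, m2_star1l_eq]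
      rw [TensorProduct.comm_tmul, brL, LinearMap.rTensor_tmul, LinearMap.rTensor_tmul,
        hskew c x, hskew c y, neg_tmul, map_neg, map_neg, map_neg, neg_tmul, map_neg,
        map_neg, map_neg, m3_sigma2_swap, m3_sigma2_swap]
      abel
  | add X Y hX hY =>
      simp only [map_add, LinearMap.add_apply, hX, hY]
      abel

lemma sb_deriv (hBr : IsDoubleBracket 𝔽 V Br) (a u w : V) :
    sb Br a (u * w) = sb Br a u * w + u * sb Br a w := by
  rw [sb, sb, sb, hBr.1 a u w, map_add, m2_ract, m2_lact]

lemma sb_symm (hBr : IsDoubleBracket 𝔽 V Br) (x y b : V) :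
    sb Br (x * y) b = sb Br (y * x) b := by
  rw [sb, sb, hBr.2 x y b, hBr.2 y x b, map_add, map_add, m2_star1l_eq, m2_star1l_eq]
  abel

lemma part2 (hBr : IsDoubleBracket 𝔽 V Br) (hskew : IsSkew 𝔽 V Br)
    (hJac : ∀ a b c : V, triple Br a b c = 0) (a b c : V) :
    sb Br a (sb Br b c) - sb Br b (sb Br a c) = sb Br (sb Br a b) c := by
  have J1 := congrArg (m3 : (V ⊗[𝔽] V) ⊗[𝔽] V →ₗ[𝔽] V) (hJac a b c)
  have J2 := congrArg (m3 : (V ⊗[𝔽] V) ⊗[𝔽] V →ₗ[𝔽] V) (hJac b a c)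
  rw [triple, map_add, map_add, map_zero, hskew c a] at J1
  rw [triple, map_add, map_add, map_zero, hskew c b, hskew b a] at J2
  simp only [map_neg] at J1 J2
  rw [sigmaTerm b (Br a c)] at J1
  rw [sigmaTerm a (Br b c)] at J2
  simp only [sb]
  rw [sbA hBr a (Br b c), sbA hBr b (Br a c), lemC hBr hskew c (Br a b)]
  set T1 := m3 (brL Br a (Br b c)) with hT1
  set T2 := m3 (brR Br a (Br b c)) with hT2
  set S1 := m3 (brL Br b (Br a c)) with hS1
  set S2 := m3 (brR Br b (Br a c)) with hS2
  set U1 := m3 (sigma3 𝔽 V (sigma3 𝔽 V (brL Br c (Br a b)))) with hU1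
  set U2 := m3 (sigma3 𝔽 V (sigma3 𝔽 V (brL Br c (swap2 𝔽 V (Br a b))))) with hU2
  rw [← sub_eq_zero]
  have h : T1 + T2 - (S1 + S2) - (-U1 - U2) =
      (T1 + -S2 + U1) - (S1 + -T2 + -U2) := by abel
  rw [h, J1, J2, sub_zero]

end Helpers

/-- for a double Poisson algebra (2-fold bracket + skewsymmetry + Jacobi)
and `{a,b} := m{{a,b}}`:
(i) `{a,b} + {b,a} ∈ [V,V]`; (ii) `{a,{b,c}} − {b,{a,c}} = {{a,b},c}`;
consequently `V/[V,V]` is a Lie algebra with bracket `[tr a, tr b] = tr{a,b}`,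
and `(tr a, b) ↦ {a,b}` is a representation of it on `V` by derivations. -/
theorem statement_8 (𝔽 : Type) [Field 𝔽] [CharZero 𝔽] (V : Type) [Ring V] [Algebra 𝔽 V]
    (Br : V →ₗ[𝔽] V →ₗ[𝔽] V ⊗[𝔽] V) (hBr : IsDoubleBracket 𝔽 V Br)
    (hskew : IsSkew 𝔽 V Br) (hJac : ∀ a b c : V, triple Br a b c = 0) :
    (∀ a b : V, sb Br a b + sb Br b a ∈ commSub 𝔽 V) ∧
    (∀ a b c : V, sb Br a (sb Br b c) - sb Br b (sb Br a c) = sb Br (sb Br a b) c) ∧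
    (∃ β : (V ⧸ commSub 𝔽 V) →ₗ[𝔽] (V ⧸ commSub 𝔽 V) →ₗ[𝔽] (V ⧸ commSub 𝔽 V),
      (∀ a b : V, β (Submodule.Quotient.mk a) (Submodule.Quotient.mk b) =
        Submodule.Quotient.mk (sb Br a b)) ∧
      (∀ x y, β x y = - β y x) ∧
      (∀ x y z, β x (β y z) - β y (β x z) = β (β x y) z) ∧
      (∃ ρ : (V ⧸ commSub 𝔽 V) →ₗ[𝔽] V →ₗ[𝔽] V,
        (∀ a b : V, ρ (Submodule.Quotient.mk a) b = sb Br a b) ∧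
        (∀ x, ∀ u w : V, ρ x (u * w) = ρ x u * w + u * ρ x w) ∧
        (∀ x y, ρ x ∘ₗ ρ y - ρ y ∘ₗ ρ x = ρ (β x y)))) := by
  have hp1 : ∀ a b : V, sb Br a b + sb Br b a ∈ commSub 𝔽 V := by
    intro a b
    have h : sb Br b a = - (LinearMap.mul' 𝔽 V (swap2 𝔽 V (Br a b))) := by
      rw [sb, hskew b a, map_neg]
    rw [h, ← sub_eq_add_neg]
    exact m2_sub_swap_mem (Br a b)
  have hp2 := part2 hBr hskew hJac
  -- the bilinear map (a,b) ↦ {a,b}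
  set sbL : V →ₗ[𝔽] V →ₗ[𝔽] V := LinearMap.compr₂ Br (LinearMap.mul' 𝔽 V) with hsbL
  have hsbL_apply : ∀ a b : V, sbL a b = sb Br a b := fun a b => rfl
  have hker1 : commSub 𝔽 V ≤ LinearMap.ker sbL := by
    apply Submodule.span_le.mpr
    rintro x ⟨u, w, rfl⟩
    rw [SetLike.mem_coe, LinearMap.mem_ker, map_sub]
    rw [sub_eq_zero]
    ext b
    exact sb_symm hBr u w b
  set ρ : (V ⧸ commSub 𝔽 V) →ₗ[𝔽] V →ₗ[𝔽] V := Submodule.liftQ _ sbL hker1 with hρdef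
  have hρ : ∀ a b : V, ρ (Submodule.Quotient.mk a) b = sb Br a b := fun a b => rfl
  -- β construction
  set βpre : V →ₗ[𝔽] V →ₗ[𝔽] (V ⧸ commSub 𝔽 V) :=
    LinearMap.compr₂ sbL (commSub 𝔽 V).mkQ with hβpre
  have h2 : commSub 𝔽 V ≤ LinearMap.ker βpre.flip := by
    apply Submodule.span_le.mpr
    rintro x ⟨u, w, rfl⟩
    rw [SetLike.mem_coe, LinearMap.mem_ker]
    ext a
    show (commSub 𝔽 V).mkQ (sbL a (u * w - w * u)) = 0
    rw [map_sub, map_sub, Submodule.mkQ_apply, Submodule.mkQ_apply, ← Submodule.Quotient.mk_sub, Submodule.Quotient.mk_eq_zero]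
    rw [hsbL_apply, hsbL_apply, sb_deriv hBr a u w, sb_deriv hBr a w u]
    have h : sb Br a u * w + u * sb Br a w - (sb Br a w * u + w * sb Br a u) =
        (sb Br a u * w - w * sb Br a u) + (u * sb Br a w - sb Br a w * u) := by abel
    rw [h]
    exact add_mem (Submodule.subset_span ⟨sb Br a u, w, rfl⟩)
      (Submodule.subset_span ⟨u, sb Br a w, rfl⟩)
  set βin : (V ⧸ commSub 𝔽 V) →ₗ[𝔽] V →ₗ[𝔽] (V ⧸ commSub 𝔽 V) :=
    Submodule.liftQ _ βpre.flip h2 with hβin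
  have h3 : commSub 𝔽 V ≤ LinearMap.ker βin.flip := by
    intro g hg
    rw [LinearMap.mem_ker]
    refine LinearMap.ext fun x => ?_
    obtain ⟨b, rfl⟩ := Submodule.Quotient.mk_surjective _ x
    show βpre g b = 0
    have hg0 : sbL g = 0 := hker1 hg
    show (commSub 𝔽 V).mkQ (sbL g b) = 0
    rw [hg0]
    simp
  set β : (V ⧸ commSub 𝔽 V) →ₗ[𝔽] (V ⧸ commSub 𝔽 V) →ₗ[𝔽] (V ⧸ commSub 𝔽 V) :=
    Submodule.liftQ _ βin.flip h3 with hβdef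
  have hβ : ∀ a b : V, β (Submodule.Quotient.mk a) (Submodule.Quotient.mk b) =
      Submodule.Quotient.mk (sb Br a b) := fun a b => rfl
  refine ⟨hp1, hp2, β, hβ, ?_, ?_, ρ, hρ, ?_, ?_⟩
  · intro x y
    obtain ⟨a, rfl⟩ := Submodule.Quotient.mk_surjective _ x
    obtain ⟨b, rfl⟩ := Submodule.Quotient.mk_surjective _ y
    rw [hβ, hβ]
    refine eq_neg_of_add_eq_zero_left ?_
    rw [← Submodule.Quotient.mk_add, Submodule.Quotient.mk_eq_zero]
    exact hp1 a b
  · intro x y z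
    obtain ⟨a, rfl⟩ := Submodule.Quotient.mk_surjective _ x
    obtain ⟨b, rfl⟩ := Submodule.Quotient.mk_surjective _ y
    obtain ⟨c, rfl⟩ := Submodule.Quotient.mk_surjective _ z
    rw [hβ, hβ, hβ, hβ, hβ, ← Submodule.Quotient.mk_sub]
    exact congrArg _ (hp2 a b c)
  · intro x u w
    obtain ⟨a, rfl⟩ := Submodule.Quotient.mk_surjective _ x
    rw [hρ, hρ, hρ]
    exact sb_deriv hBr a u w
  · intro x y
    obtain ⟨a, rfl⟩ := Submodule.Quotient.mk_surjective _ x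
    obtain ⟨b, rfl⟩ := Submodule.Quotient.mk_surjective _ y
    ext v
    rw [LinearMap.sub_apply, LinearMap.comp_apply, LinearMap.comp_apply, hβ, hρ, hρ, hρ, hρ, hρ]
    exact hp2 a b v
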